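/- Every nonempty 3-regular subgraph of the 3-dimensional grid has girth at most 16. -/

import Mathlib

/-- The `n`-dimensional grid: the unit-distance graph on `ℤ^n`. Two points are adjacent
iff they differ by exactly 1 in one coordinate and agree in all others, i.e. iff the sum
of the absolute coordinate differences is 1. -/
def grid (n : ℕ) : SimpleGraph (Fin n → ℤ) where
  Adj x y := ∑ i, |x i - y i| = 1
  symm := ⟨fun x y h => by
    rwa [Finset.sum_congr rfl fun i _ => abs_sub_comm (y i) (x i)]⟩
  loopless := ⟨fun x h => by simp at h⟩

/-- The induced subgraph of the `n`-dimensional grid on `S` is `k`-regular: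
every vertex has exactly `k` neighbours. -/
def IsRegularInduced (n : ℕ) (S : Set (Fin n → ℤ)) (k : ℕ) : Prop :=
  ∀ v : S, (((grid n).induce S).neighborSet v).ncard = k

namespace GridGirth

open SimpleGraph

variable {V : Type*} (G : SimpleGraph V)

/-- A walk built from a sequence of adjacent vertices. -/
def toWalk (f : ℕ → V) (a : ℕ) :
    (n : ℕ) → (∀ j < n, G.Adj (f (a + j)) (f (a + j + 1))) → G.Walk (f a) (f (a + n))
  | 0, _ => SimpleGraph.Walk.nil
  | n + 1, h =>
    (toWalk f a n (fun j hj => h j (Nat.lt_succ_of_lt hj))).concat (h n (Nat.lt_succ_self n))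

lemma toWalk_length (f : ℕ → V) (a : ℕ) :
    ∀ (n : ℕ) (h : ∀ j < n, G.Adj (f (a + j)) (f (a + j + 1))),
      (toWalk G f a n h).length = n
  | 0, _ => rfl
  | n + 1, h => by
    simp [toWalk, toWalk_length f a n]

lemma toWalk_support (f : ℕ → V) (a : ℕ) :
    ∀ (n : ℕ) (h : ∀ j < n, G.Adj (f (a + j)) (f (a + j + 1))),
      (toWalk G f a n h).support = (List.range (n + 1)).map (fun j => f (a + j))
  | 0, _ => by simp [toWalk, List.range_succ]
  | n + 1, h => by
    rw [toWalk, SimpleGraph.Walk.support_concat, toWalk_support f a n,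
      List.range_succ (n := n + 1), List.map_append]
    simp

lemma toWalk_edges (f : ℕ → V) (a : ℕ) :
    ∀ (n : ℕ) (h : ∀ j < n, G.Adj (f (a + j)) (f (a + j + 1))),
      (toWalk G f a n h).edges = (List.range n).map (fun j => s(f (a + j), f (a + j + 1)))
  | 0, _ => by simp [toWalk]
  | n + 1, h => by
    rw [toWalk, SimpleGraph.Walk.edges_concat, toWalk_edges f a n,
      List.range_succ (n := n), List.map_append]
    simp [Nat.add_assoc]

/-- From a closed, internally non-backtracking sequence, extract a cycle. -/
lemma exists_cycle_of_closed (N : ℕ) (f : ℕ → V) (hN : 1 ≤ N)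
    (hadj : ∀ i < N, G.Adj (f i) (f (i + 1)))
    (hclosed : f N = f 0)
    (hnbt : ∀ i, 0 < i → i < N → f (i + 1) ≠ f (i - 1)) :
    ∃ (x : V) (c : G.Walk x x), c.IsCycle ∧ c.length ≤ N := by
  classical
  have hP : ∃ d, 1 ≤ d ∧ ∃ i, i + d ≤ N ∧ f i = f (i + d) :=
    ⟨N, hN, 0, by omega, by rw [Nat.zero_add]; exact hclosed.symm⟩
  obtain ⟨hm1, i, hiN, hfi⟩ := Nat.find_spec hP
  set m := Nat.find hP with hm
  have hmN : m ≤ N := Nat.find_le ⟨hN, 0, by omega, by rw [Nat.zero_add]; exact hclosed.symm⟩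
  have hmin : ∀ d, 1 ≤ d → d < m → ∀ j, j + d ≤ N → f j ≠ f (j + d) := by
    intro d h1 h2 j hj hfj
    exact Nat.find_min hP h2 ⟨h1, j, hj, hfj⟩
  have hm3 : 3 ≤ m := by
    have h1 : m ≠ 1 := by
      intro h; rw [h] at hfi
      exact G.ne_of_adj (hadj i (by omega)) hfi
    have h2 : m ≠ 2 := by
      intro h; rw [h] at hfi hiN
      exact hnbt (i + 1) (by omega) (by omega) hfi.symm
    omega
  have hdist : ∀ a b, i ≤ a → a < b → b ≤ i + m → (a ≠ i ∨ b ≠ i + m) → f a ≠ f b := by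
    intro a b ha hab hb hor hfe
    have hcase : b - a < m ∨ (a = i ∧ b = i + m) := by omega
    rcases hcase with hlt | ⟨rfl, rfl⟩
    · refine hmin (b - a) (by omega) hlt a (by omega) ?_
      have hba : a + (b - a) = b := by omega
      rw [hba]; exact hfe
    · rcases hor with h | h <;> exact h rfl
  have hadj' : ∀ j < m - 1, G.Adj (f (i + 1 + j)) (f (i + 1 + j + 1)) := by
    intro j hj; exact hadj (i + 1 + j) (by omega)
  have hcast : f (i + 1 + (m - 1)) = f i := by
    have hh : i + 1 + (m - 1) = i + m := by omega
    rw [hh]; exact hfi.symm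
  have hAdj0 : G.Adj (f i) (f (i + 1)) := hadj i (by omega)
  refine ⟨f i, SimpleGraph.Walk.cons hAdj0 ((toWalk G f (i + 1) (m - 1) hadj').copy rfl hcast),
    ?_, ?_⟩
  · rw [SimpleGraph.Walk.cons_isCycle_iff]
    constructor
    · rw [SimpleGraph.Walk.isPath_def, SimpleGraph.Walk.support_copy, toWalk_support]
      refine List.Nodup.map_on ?_ List.nodup_range
      intro x hx y hy hxy
      rw [List.mem_range] at hx hy
      by_contra hne
      rcases Nat.lt_or_ge x y with h | h
      · exact hdist (i + 1 + x) (i + 1 + y) (by omega) (by omega) (by omega)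
          (Or.inl (by omega)) hxy
      · exact hdist (i + 1 + y) (i + 1 + x) (by omega) (by omega) (by omega)
          (Or.inl (by omega)) hxy.symm
    · rw [SimpleGraph.Walk.edges_copy, toWalk_edges]
      intro hmem
      rw [List.mem_map] at hmem
      obtain ⟨j, hj, hEq⟩ := hmem
      rw [List.mem_range] at hj
      rw [Sym2.eq_iff] at hEq
      rcases hEq with ⟨h1, h2⟩ | ⟨h1, h2⟩
      · exact hdist i (i + 1 + j) le_rfl (by omega) (by omega) (Or.inr (by omega)) h1.symm
      · rcases Nat.lt_or_ge (j + 2) m with hb | hb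
        · exact hdist i (i + 1 + j + 1) le_rfl (by omega) (by omega) (Or.inr (by omega)) h2.symm
        · exact hdist (i + 1) (i + 1 + j) (by omega) (by omega) (by omega)
            (Or.inl (by omega)) h1.symm
  · rw [SimpleGraph.Walk.length_cons, SimpleGraph.Walk.length_copy, toWalk_length]
    omega

/-- Two distinct non-backtracking walks with common endpoints yield a short cycle. -/
lemma exists_cycle_of_two :
    ∀ (n k l : ℕ) (f g : ℕ → V), k + l ≤ n →
    (∀ i < k, G.Adj (f i) (f (i + 1))) →
    (∀ i < l, G.Adj (g i) (g (i + 1))) →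
    (∀ i, 0 < i → i < k → f (i + 1) ≠ f (i - 1)) →
    (∀ i, 0 < i → i < l → g (i + 1) ≠ g (i - 1)) →
    f 0 = g 0 → f k = g l →
    ¬(k = l ∧ ∀ i ≤ k, f i = g i) →
    ∃ (x : V) (c : G.Walk x x), c.IsCycle ∧ c.length ≤ k + l := by
  intro n
  induction n with
  | zero =>
    intro k l f g hn _ _ _ _ h0 _ hne
    exfalso
    have hk : k = 0 := by omega
    have hl : l = 0 := by omega
    subst hk; subst hl
    exact hne ⟨rfl, fun i hi => by
      have hi0 : i = 0 := by omega
      subst hi0; exact h0⟩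
  | succ n ih =>
    intro k l f g hn hf hg hnf hng h0 hkl hne
    rcases Nat.eq_zero_or_pos k with rfl | hk
    · rcases Nat.eq_zero_or_pos l with rfl | hl
      · exfalso
        exact hne ⟨rfl, fun i hi => by
          have hi0 : i = 0 := by omega
          subst hi0; exact h0⟩
      · obtain ⟨x, c, hc, hlen⟩ := exists_cycle_of_closed G l g hl hg
          (by rw [← hkl]; exact h0) hng
        exact ⟨x, c, hc, by omega⟩
    rcases Nat.eq_zero_or_pos l with rfl | hl
    · obtain ⟨x, c, hc, hlen⟩ := exists_cycle_of_closed G k f hk hf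
        (by rw [hkl]; exact h0.symm) hnf
      exact ⟨x, c, hc, by omega⟩
    by_cases hlast : f (k - 1) = g (l - 1)
    · obtain ⟨x, c, hc, hlen⟩ := ih (k - 1) (l - 1) f g (by omega)
        (fun i hi => hf i (by omega)) (fun i hi => hg i (by omega))
        (fun i h1 h2 => hnf i h1 (by omega)) (fun i h1 h2 => hng i h1 (by omega))
        h0 hlast
        (by
          rintro ⟨hEq, hAll⟩
          apply hne
          refine ⟨by omega, fun i hi => ?_⟩
          rcases Nat.lt_or_ge i k with h | h
          · exact hAll i (by omega)
          · have hik : i = k := by omega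
            subst hik
            rw [hkl]
            congr 1
            omega)
      exact ⟨x, c, hc, by omega⟩
    · set h : ℕ → V := fun i => if i ≤ k then f i else g (k + l - i) with hdef
      have hlow : ∀ i, i ≤ k → h i = f i := fun i hi => by simp [hdef, hi]
      have hup : ∀ i, k ≤ i → i ≤ k + l → h i = g (k + l - i) := by
        intro i h1 h2
        rcases Nat.lt_or_ge k i with hlt | hge
        · simp [hdef, Nat.not_le.mpr hlt]
        · have hik : i = k := by omega
          rw [hik]
          have hkk : k + l - k = l := by omega
          simp only [hdef, le_refl, if_pos]
          rw [hkk]; exact hkl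
      have hadjh : ∀ i < k + l, G.Adj (h i) (h (i + 1)) := by
        intro i hi
        rcases Nat.lt_or_ge i k with hik | hik
        · rw [hlow i (by omega), hlow (i + 1) (by omega)]
          exact hf i hik
        · rw [hup i hik (by omega), hup (i + 1) (by omega) (by omega)]
          have e1 : k + l - i = (k + l - (i + 1)) + 1 := by omega
          rw [e1]
          exact (hg (k + l - (i + 1)) (by omega)).symm
      have hclosedh : h (k + l) = h 0 := by
        rw [hup (k + l) (by omega) le_rfl, hlow 0 (by omega), Nat.sub_self]
        exact h0.symm
      have hnbth : ∀ i, 0 < i → i < k + l → h (i + 1) ≠ h (i - 1) := by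
        intro i h1 h2
        rcases Nat.lt_or_ge i k with hik | hik
        · rw [hlow (i + 1) (by omega), hlow (i - 1) (by omega)]
          exact hnf i h1 hik
        · rcases Nat.eq_or_lt_of_le hik with hik2 | hik2
          · have hik3 : i = k := hik2.symm
            rw [hik3]
            rw [hup (k + 1) (by omega) (by omega), hlow (k - 1) (by omega)]
            have e1 : k + l - (k + 1) = l - 1 := by omega
            rw [e1]
            exact fun hh => hlast hh.symm
          · rw [hup (i + 1) (by omega) (by omega), hup (i - 1) (by omega) (by omega)]
            have e1 : k + l - (i + 1) = (k + l - i) - 1 := by omega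
            have e2 : k + l - (i - 1) = (k + l - i) + 1 := by omega
            rw [e1, e2]
            exact (hng (k + l - i) (by omega) (by omega)).symm
      obtain ⟨x, c, hc, hlen⟩ := exists_cycle_of_closed G (k + l) h (by omega)
        hadjh hclosedh hnbth
      exact ⟨x, c, hc, hlen⟩

lemma exists_inj_fin (s : Set V) (n : ℕ) (h : s.ncard = n) :
    ∃ t : Fin n → V, Function.Injective t ∧ ∀ c, t c ∈ s := by
  classical
  by_cases hfin : s.Finite
  · haveI := hfin.fintype
    have hcard : Fintype.card s = n := by
      rw [← h, Set.ncard_eq_toFinset_card' s, Set.toFinset_card]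
    let e := Fintype.equivFinOfCardEq hcard
    refine ⟨fun c => (e.symm c : V), ?_, fun c => (e.symm c).2⟩
    intro a b hab
    exact e.symm.injective (Subtype.ext hab)
  · have h0 : s.ncard = 0 := Set.Infinite.ncard hfin
    rw [h0] at h
    subst h
    exact ⟨Fin.elim0, fun a => a.elim0, fun c => c.elim0⟩

variable (hreg : ∀ u : V, (G.neighborSet u).ncard = 3)

/-- A choice of the three neighbours of a vertex. -/
noncomputable def nbr3 (u : V) : Fin 3 → V :=
  Classical.choose (exists_inj_fin (G.neighborSet u) 3 (hreg u))

lemma nbr3_inj (u : V) : Function.Injective (nbr3 G hreg u) :=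
  (Classical.choose_spec (exists_inj_fin (G.neighborSet u) 3 (hreg u))).1

lemma nbr3_adj (u : V) (c : Fin 3) : G.Adj u (nbr3 G hreg u c) :=
  (Classical.choose_spec (exists_inj_fin (G.neighborSet u) 3 (hreg u))).2 c

open Classical in
/-- A choice of the two neighbours of `u` other than `w`. -/
noncomputable def nbr2 (w u : V) : Fin 2 → V :=
  if h : G.Adj w u then
    Classical.choose (exists_inj_fin (G.neighborSet u \ {w}) 2 (by
      have hw : w ∈ G.neighborSet u := h.symm
      have hfin : (G.neighborSet u).Finite :=
        Set.finite_of_ncard_ne_zero (by rw [hreg u]; omega)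
      rw [Set.ncard_diff_singleton_of_mem hw, hreg u]))
  else fun _ => u

lemma nbr2_spec {w u : V} (h : G.Adj w u) :
    Function.Injective (nbr2 G hreg w u) ∧
      ∀ c, G.Adj u (nbr2 G hreg w u c) ∧ nbr2 G hreg w u c ≠ w := by
  simp only [nbr2]
  rw [dif_pos h]
  obtain ⟨h1, h2⟩ := Classical.choose_spec (exists_inj_fin
    (G.neighborSet u \ {w}) 2 (by
      have hw : w ∈ G.neighborSet u := h.symm
      have hfin : (G.neighborSet u).Finite :=
        Set.finite_of_ncard_ne_zero (by rw [hreg u]; omega)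
      rw [Set.ncard_diff_singleton_of_mem hw, hreg u]))
  refine ⟨h1, fun c => ?_⟩
  obtain ⟨hm, hne⟩ := h2 c
  exact ⟨hm, by simpa using hne⟩

/-- The pair sequence of a non-backtracking walk driven by choices. -/
noncomputable def seqP (v : V) (c0 : Fin 3) (cs : ℕ → Fin 2) : ℕ → V × V := fun n =>
  Nat.rec (v, nbr3 G hreg v c0) (fun n p => (p.2, nbr2 G hreg p.1 p.2 (cs n))) n

noncomputable def seqF (v : V) (c0 : Fin 3) (cs : ℕ → Fin 2) (n : ℕ) : V :=
  (seqP G hreg v c0 cs n).1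

lemma seqF_zero (v : V) (c0 : Fin 3) (cs : ℕ → Fin 2) : seqF G hreg v c0 cs 0 = v := rfl

lemma seqF_one (v : V) (c0 : Fin 3) (cs : ℕ → Fin 2) :
    seqF G hreg v c0 cs 1 = nbr3 G hreg v c0 := rfl

lemma seqF_two (v : V) (c0 : Fin 3) (cs : ℕ → Fin 2) (n : ℕ) :
    seqF G hreg v c0 cs (n + 2) =
      nbr2 G hreg (seqF G hreg v c0 cs n) (seqF G hreg v c0 cs (n + 1)) (cs n) := rfl

lemma seqF_adj (v : V) (c0 : Fin 3) (cs : ℕ → Fin 2) (n : ℕ) :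
    G.Adj (seqF G hreg v c0 cs n) (seqF G hreg v c0 cs (n + 1)) := by
  induction n with
  | zero => exact nbr3_adj G hreg v c0
  | succ n ihn =>
    rw [seqF_two]
    exact ((nbr2_spec G hreg ihn).2 (cs n)).1

lemma seqF_nbt (v : V) (c0 : Fin 3) (cs : ℕ → Fin 2) (n : ℕ) :
    seqF G hreg v c0 cs (n + 2) ≠ seqF G hreg v c0 cs n := by
  rw [seqF_two]
  exact ((nbr2_spec G hreg (seqF_adj G hreg v c0 cs n)).2 (cs n)).2

/-- Codes for the non-backtracking walks of even lengths `0, 2, 4, 6, 8`. -/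
abbrev Code := Option ((j : Fin 4) × (Fin 3 × (Fin (2 * j.1 + 1) → Fin 2)))

def codeLen : Code → ℕ
  | none => 0
  | some ⟨j, _⟩ => 2 * j.1 + 2

lemma codeLen_le (c : Code) : codeLen c ≤ 8 := by
  match c with
  | none => simp [codeLen]
  | some ⟨j, _⟩ => have := j.isLt; simp only [codeLen]; omega

lemma codeLen_even (c : Code) : codeLen c % 2 = 0 := by
  match c with
  | none => rfl
  | some ⟨j, _⟩ => simp only [codeLen]; omega

/-- Extend a finitely supported choice function. -/
def extC {m : ℕ} (cs : Fin m → Fin 2) : ℕ → Fin 2 := fun n =>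
  if h : n < m then cs ⟨n, h⟩ else 0

noncomputable def codeF (v : V) : Code → ℕ → V
  | none => fun _ => v
  | some ⟨_, (c0, cs)⟩ => seqF G hreg v c0 (extC cs)

lemma codeF_zero (v : V) (c : Code) : codeF G hreg v c 0 = v := by
  match c with
  | none => rfl
  | some ⟨j, (c0, cs)⟩ => rfl

lemma codeF_adj (v : V) (c : Code) :
    ∀ i < codeLen c, G.Adj (codeF G hreg v c i) (codeF G hreg v c (i + 1)) := by
  match c with
  | none => intro i hi; simp [codeLen] at hi
  | some ⟨j, (c0, cs)⟩ =>
    intro i _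
    exact seqF_adj G hreg v c0 (extC cs) i

lemma codeF_nbt (v : V) (c : Code) :
    ∀ i, 0 < i → i < codeLen c → codeF G hreg v c (i + 1) ≠ codeF G hreg v c (i - 1) := by
  match c with
  | none => intro i h1 h2; simp only [codeLen] at h2; omega
  | some ⟨j, (c0, cs)⟩ =>
    intro i h1 _
    have e1 : i + 1 = (i - 1) + 2 := by omega
    rw [e1]
    exact seqF_nbt G hreg v c0 (extC cs) (i - 1)

lemma code_eq_of_seq (v : V) (c1 c2 : Code) (hlen : codeLen c1 = codeLen c2)
    (hall : ∀ i ≤ codeLen c1, codeF G hreg v c1 i = codeF G hreg v c2 i) : c1 = c2 := by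
  match c1, c2 with
  | none, none => rfl
  | none, some ⟨j, (c0, cs)⟩ => simp [codeLen] at hlen
  | some ⟨j, (c0, cs)⟩, none => simp [codeLen] at hlen
  | some ⟨j1, (c01, cs1)⟩, some ⟨j2, (c02, cs2)⟩ =>
    simp only [codeLen] at hlen
    have hj : j1 = j2 := Fin.ext (by omega)
    subst hj
    simp only [codeLen, codeF] at hall
    have h1 := hall 1 (by omega)
    rw [seqF_one, seqF_one] at h1
    have hc0 : c01 = c02 := nbr3_inj G hreg v h1
    subst hc0
    have hcs : cs1 = cs2 := by
      funext t
      have h2 := hall (t.1 + 2) (by have := t.isLt; omega)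
      rw [seqF_two, seqF_two] at h2
      have ha := hall t.1 (by have := t.isLt; omega)
      have hb := hall (t.1 + 1) (by have := t.isLt; omega)
      rw [ha, hb] at h2
      have hadjab : G.Adj (seqF G hreg v c01 (extC cs2) t.1)
          (seqF G hreg v c01 (extC cs2) (t.1 + 1)) := seqF_adj G hreg v c01 (extC cs2) t.1
      have hval := (nbr2_spec G hreg hadjab).1 h2
      simp only [extC, dif_pos t.isLt] at hval
      simpa using hval
    rw [hcs]

set_option maxRecDepth 40000 in
lemma codeCard : Fintype.card Code = 511 := by decide

set_option maxRecDepth 40000 in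
lemma targetCard :
    ((Finset.Icc (-8 : ℤ) 8 ×ˢ Finset.Icc (-8 : ℤ) 8 ×ˢ Finset.Icc (-8 : ℤ) 8).filter
      (fun p => |p.1| + |p.2.1| + |p.2.2| ≤ 8 ∧ (p.1 + p.2.1 + p.2.2) % 2 = 0)).card = 489 := by
  decide

end GridGirth

open GridGirth SimpleGraph

theorem dim3_cubic_girth_le_sixteen (H : (grid 3).Subgraph) (hne : H.verts.Nonempty)
    (hreg : ∀ v ∈ H.verts, (H.neighborSet v).ncard = 3) :
    H.coe.egirth ≤ 16 := by
  classical
  by_contra hcon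
  push_neg at hcon
  set G := H.coe with hGdef
  have hreg' : ∀ u : H.verts, (G.neighborSet u).ncard = 3 := by
    intro u
    calc (G.neighborSet u).ncard
        = Nat.card (G.neighborSet u) := (Nat.card_coe_set_eq _).symm
      _ = Nat.card (H.neighborSet u) := Nat.card_congr (Subgraph.coeNeighborSetEquiv u)
      _ = (H.neighborSet u).ncard := Nat.card_coe_set_eq _
      _ = 3 := hreg u u.2
  have hNS : ∀ (x : H.verts) (c : G.Walk x x), c.IsCycle → 16 < c.length := by
    intro x c hc
    by_contra hh
    push_neg at hh
    have h1 : G.egirth ≤ c.length := by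
      rw [egirth]
      refine iInf_le_of_le x ?_
      refine iInf_le_of_le c ?_
      exact iInf_le _ hc
    have h2 : G.egirth ≤ 16 := h1.trans (by exact_mod_cast hh)
    exact absurd h2 (not_le.mpr hcon)
  obtain ⟨v0, hv0⟩ := hne
  set v : H.verts := ⟨v0, hv0⟩ with hvdef
  -- the endpoint map on codes
  set E : Code → H.verts := fun c => codeF G hreg' v c (codeLen c) with hEdef
  have hEinj : Function.Injective E := by
    intro c1 c2 hE
    by_contra hne12
    have hneq : ¬(codeLen c1 = codeLen c2 ∧
        ∀ i ≤ codeLen c1, codeF G hreg' v c1 i = codeF G hreg' v c2 i) := by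
      rintro ⟨ha, hb⟩
      exact hne12 (code_eq_of_seq G hreg' v c1 c2 ha hb)
    obtain ⟨x, c, hc, hlc⟩ := exists_cycle_of_two G 16 (codeLen c1) (codeLen c2)
      (codeF G hreg' v c1) (codeF G hreg' v c2)
      (by have := codeLen_le c1; have := codeLen_le c2; omega)
      (codeF_adj G hreg' v c1) (codeF_adj G hreg' v c2)
      (codeF_nbt G hreg' v c1) (codeF_nbt G hreg' v c2)
      (by rw [codeF_zero, codeF_zero]) hE hneq
    have h16 := hNS x c hc
    have := codeLen_le c1
    have := codeLen_le c2
    omega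
  -- metric estimates
  have hstep : ∀ (a b : H.verts), G.Adj a b →
      (∑ i, |(b : Fin 3 → ℤ) i - (a : Fin 3 → ℤ) i|) = 1 := by
    intro a b hab
    have h1 : (grid 3).Adj (a : Fin 3 → ℤ) (b : Fin 3 → ℤ) := H.adj_sub (hab)
    exact h1.symm
  have hwalkbound : ∀ (m : ℕ) (f : ℕ → H.verts), (∀ i < m, G.Adj (f i) (f (i + 1))) →
      (∑ i, |(f m : Fin 3 → ℤ) i - (f 0 : Fin 3 → ℤ) i|) ≤ (m : ℤ) ∧
      (∑ i, ((f m : Fin 3 → ℤ) i - (f 0 : Fin 3 → ℤ) i)) % 2 = (m : ℤ) % 2 := by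
    intro m
    induction m with
    | zero => intro f _; constructor <;> simp
    | succ m ihm =>
      intro f hf
      obtain ⟨ih1, ih2⟩ := ihm f (fun i hi => hf i (by omega))
      have hstepm := hstep (f m) (f (m + 1)) (hf m (by omega))
      have htri : (∑ i, |(f (m+1) : Fin 3 → ℤ) i - (f 0 : Fin 3 → ℤ) i|) ≤
          (∑ i, |(f (m+1) : Fin 3 → ℤ) i - (f m : Fin 3 → ℤ) i|) +
          (∑ i, |(f m : Fin 3 → ℤ) i - (f 0 : Fin 3 → ℤ) i|) := by
        rw [← Finset.sum_add_distrib]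
        exact Finset.sum_le_sum (fun i _ => abs_sub_le _ _ _)
      constructor
      · rw [hstepm] at htri
        push_cast
        linarith
      · have hsplit : (∑ i, ((f (m+1) : Fin 3 → ℤ) i - (f 0 : Fin 3 → ℤ) i)) =
            (∑ i, ((f (m+1) : Fin 3 → ℤ) i - (f m : Fin 3 → ℤ) i)) +
            (∑ i, ((f m : Fin 3 → ℤ) i - (f 0 : Fin 3 → ℤ) i)) := by
          rw [← Finset.sum_add_distrib]
          exact Finset.sum_congr rfl (fun i _ => by ring)
        have hodd : (∑ i, ((f (m+1) : Fin 3 → ℤ) i - (f m : Fin 3 → ℤ) i)) % 2 = 1 := by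
          have hmods : (∑ i, ((f (m+1) : Fin 3 → ℤ) i - (f m : Fin 3 → ℤ) i)) % 2 =
              (∑ i, |(f (m+1) : Fin 3 → ℤ) i - (f m : Fin 3 → ℤ) i|) % 2 := by
            rw [Finset.sum_int_mod, Finset.sum_int_mod _ _ (fun i => |_ - _|)]
            congr 1
            refine Finset.sum_congr rfl (fun i _ => ?_)
            rcases abs_choice ((f (m+1) : Fin 3 → ℤ) i - (f m : Fin 3 → ℤ) i) with h | h
            · rw [h]
            · rw [h, Int.neg_emod_two]
          rw [hmods, hstepm]
          decide
        rw [hsplit]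
        push_cast
        omega
  -- membership in the explicit finite target set
  set T : Finset (ℤ × ℤ × ℤ) :=
    (Finset.Icc (-8 : ℤ) 8 ×ˢ Finset.Icc (-8 : ℤ) 8 ×ˢ Finset.Icc (-8 : ℤ) 8).filter
      (fun p => |p.1| + |p.2.1| + |p.2.2| ≤ 8 ∧ (p.1 + p.2.1 + p.2.2) % 2 = 0) with hTdef
  set χ : Code → ℤ × ℤ × ℤ := fun c =>
    ((E c : Fin 3 → ℤ) 0 - v0 0, (E c : Fin 3 → ℤ) 1 - v0 1, (E c : Fin 3 → ℤ) 2 - v0 2)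
    with hχdef
  have hv0eq : ((codeF G hreg' v (none : Code) 0 : H.verts) : Fin 3 → ℤ) = v0 := rfl
  have hmemT : ∀ c : Code, χ c ∈ T := by
    intro c
    obtain ⟨hb, hp⟩ := hwalkbound (codeLen c) (codeF G hreg' v c) (codeF_adj G hreg' v c)
    have h0v : ((codeF G hreg' v c 0 : H.verts) : Fin 3 → ℤ) = v0 := by
      rw [codeF_zero]
    rw [h0v] at hb hp
    have hsum3 : (∑ i, |(E c : Fin 3 → ℤ) i - v0 i|) =
        |(E c : Fin 3 → ℤ) 0 - v0 0| + |(E c : Fin 3 → ℤ) 1 - v0 1| +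
        |(E c : Fin 3 → ℤ) 2 - v0 2| := by
      rw [Fin.sum_univ_three]
    have hsum3' : (∑ i, ((E c : Fin 3 → ℤ) i - v0 i)) =
        ((E c : Fin 3 → ℤ) 0 - v0 0) + ((E c : Fin 3 → ℤ) 1 - v0 1) +
        ((E c : Fin 3 → ℤ) 2 - v0 2) := by
      rw [Fin.sum_univ_three]
    have hble : (∑ i, |(E c : Fin 3 → ℤ) i - v0 i|) ≤ 8 := by
      refine hb.trans ?_
      exact_mod_cast Nat.cast_le.mpr (codeLen_le c)
    have hpar : (∑ i, ((E c : Fin 3 → ℤ) i - v0 i)) % 2 = 0 := by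
      rw [hp]
      have := codeLen_even c
      omega
    have hsingle : ∀ i : Fin 3, |(E c : Fin 3 → ℤ) i - v0 i| ≤ 8 := by
      intro i
      refine le_trans ?_ hble
      exact Finset.single_le_sum (f := fun j => |(E c : Fin 3 → ℤ) j - v0 j|)
        (fun j _ => abs_nonneg _) (Finset.mem_univ i)
    rw [hTdef, Finset.mem_filter]
    constructor
    · rw [Finset.mem_product]
      constructor
      · rw [Finset.mem_Icc]
        have := hsingle 0
        rw [abs_le] at this
        exact ⟨this.1, this.2⟩
      · rw [Finset.mem_product]
        constructor
        · rw [Finset.mem_Icc]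
          have := hsingle 1
          rw [abs_le] at this
          exact ⟨this.1, this.2⟩
        · rw [Finset.mem_Icc]
          have := hsingle 2
          rw [abs_le] at this
          exact ⟨this.1, this.2⟩
    · constructor
      · rw [← hsum3]; exact hble
      · rw [← hsum3']; exact hpar
  have hχinj : Function.Injective χ := by
    intro c1 c2 hc
    apply hEinj
    apply Subtype.ext
    funext i
    rw [hχdef] at hc
    simp only [Prod.mk.injEq] at hc
    obtain ⟨h0, h1, h2⟩ := hc
    have e0 : (E c1 : Fin 3 → ℤ) 0 = (E c2 : Fin 3 → ℤ) 0 := by linarith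
    have e1 : (E c1 : Fin 3 → ℤ) 1 = (E c2 : Fin 3 → ℤ) 1 := by linarith
    have e2 : (E c1 : Fin 3 → ℤ) 2 = (E c2 : Fin 3 → ℤ) 2 := by linarith
    fin_cases i
    · exact e0
    · exact e1
    · exact e2
  have hcard : Fintype.card Code ≤ T.card := by
    have h1 : (Finset.univ : Finset Code).card ≤ T.card := by
      refine Finset.card_le_card_of_injOn χ (fun c _ => hmemT c) ?_
      exact Function.Injective.injOn hχinj
    rwa [Finset.card_univ] at h1
  rw [codeCard] at hcard
  rw [hTdef] at hcard
  rw [targetCard] at hcard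
  omega
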